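/- arXiv:2109.12967 — 5 statements merged into one kernel-verified Lean document; each statement's English description precedes it below -/
import Mathlib

section
/- Let C > 0 and let b, b', m, m' ∈ ℝⁿ with all entries positive, b ≤ b' and m ≤ m' componentwise. Suppose λ > 0 satisfies ∑_i max{m_i - λ/b_i, 0} = C and λ' satisfies ∑_i max{m'_i - λ'/b'_i, 0} = C. Then λ ≤ λ'. -/
theorem stmt_2 (n : ℕ) (b b' m m' : Fin n → ℝ) (C lam lam' : ℝ)
    (hC : 0 < C)
    (hb : ∀ i, 0 < b i) (hb' : ∀ i, 0 < b' i)
    (hm : ∀ i, 0 < m i) (hm' : ∀ i, 0 < m' i)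
    (hble : ∀ i, b i ≤ b' i) (hmle : ∀ i, m i ≤ m' i)
    (hlam : 0 < lam)
    (hbal : ∑ i, max (m i - lam / b i) 0 = C)
    (hbal' : ∑ i, max (m' i - lam' / b' i) 0 = C) :
    lam ≤ lam' := by
  by_contra h
  push_neg at h
  have hkey : ∀ i, m i - lam / b i < m' i - lam' / b' i := by
    intro i
    have h1 : lam' / b' i < lam / b' i := by
      apply div_lt_div_of_pos_right h (hb' i)
    have h2 : lam / b' i ≤ lam / b i := by
      apply div_le_div_of_nonneg_left hlam.le (hb i) (hble i)
    have := hmle i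
    linarith
  -- some term on the left is positive
  have hpos : ∃ i : Fin n, 0 < max (m i - lam / b i) 0 := by
    by_contra hall
    push_neg at hall
    have : (∑ i, max (m i - lam / b i) 0) ≤ 0 :=
      Finset.sum_nonpos fun i _ => hall i
    linarith [hbal ▸ this]
  obtain ⟨j, hj⟩ := hpos
  have hlt : (∑ i, max (m i - lam / b i) 0) < ∑ i, max (m' i - lam' / b' i) 0 := by
    apply Finset.sum_lt_sum
    · intro i _
      exact max_le_max (hkey i).le le_rfl
    · refine ⟨j, Finset.mem_univ j, ?_⟩
      have hj' : m j - lam / b j > 0 := by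
        by_contra hc
        push_neg at hc
        simp [max_eq_right hc] at hj
      calc max (m j - lam / b j) 0 = m j - lam / b j := max_eq_left hj'.le
        _ < m' j - lam' / b' j := hkey j
        _ ≤ max (m' j - lam' / b' j) 0 := le_max_left _ _
  rw [hbal, hbal'] at hlt
  exact lt_irrefl C hlt
end

section
/- Let n ≥ 1, C > 0, λ† > 0. Suppose b_max, m_max > 0 satisfy either (m_max ≤ C/n) or (m_max > C/n and b_max ≤ n λ†/(n m_max - C)). Then for any parameters with 0 < b_i ≤ b_max and 0 < m_i ≤ m_max for all i, any λ* satisfying ∑_{i=1}^n max{m_i - λ*/b_i, 0} = C satisfies λ* ≤ λ†. -/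
theorem stmt_4 (n : ℕ) (hn : 1 ≤ n) (C lamd bmax mmax : ℝ)
    (hC : 0 < C) (hlamd : 0 < lamd) (hbmax : 0 < bmax) (hmmax : 0 < mmax)
    (hset : mmax ≤ C / n ∨ (mmax > C / n ∧ bmax ≤ n * lamd / (n * mmax - C)))
    (b m : Fin n → ℝ)
    (hb : ∀ i, 0 < b i) (hble : ∀ i, b i ≤ bmax)
    (hm : ∀ i, 0 < m i) (hmle : ∀ i, m i ≤ mmax)
    (lam : ℝ) (hbal : ∑ i, max (m i - lam / b i) 0 = C) :
    lam ≤ lamd := by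
  by_contra hcon
  push_neg at hcon
  have hlam : 0 < lam := lt_trans hlamd hcon
  have hnpos : (0:ℝ) < n := by exact_mod_cast Nat.lt_of_lt_of_le Nat.zero_lt_one hn
  set M := max (mmax - lam / bmax) 0 with hM
  have hsum_le : C ≤ n * M := by
    rw [← hbal]
    calc ∑ i, max (m i - lam / b i) 0 ≤ ∑ _i : Fin n, M := by
          apply Finset.sum_le_sum
          intro i _
          apply max_le_max _ le_rfl
          have h1 : lam / bmax ≤ lam / b i :=
            div_le_div_of_nonneg_left hlam.le (hb i) (hble i)
          linarith [hmle i]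
      _ = n * M := by simp [Finset.sum_const, mul_comm]
  have hMpos : 0 < M := by
    by_contra h
    push_neg at h
    nlinarith
  have hMeq : M = mmax - lam / bmax := by
    rcases max_cases (mmax - lam / bmax) (0:ℝ) with ⟨h1, _⟩ | ⟨h1, _⟩
    · exact h1
    · rw [hM] at hMpos; linarith [hMpos.trans_eq h1]
  rw [hMeq] at hsum_le
  have hdiv : lam / bmax ≤ mmax - C / n := by
    have h3 : C / n ≤ mmax - lam / bmax := (div_le_iff₀ hnpos).mpr (by linarith)
    linarith
  have hlamle : lam ≤ bmax * (mmax - C / n) := by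
    rw [div_le_iff₀ hbmax] at hdiv
    linarith
  rcases hset with h | ⟨h1, h2⟩
  · nlinarith
  · have hden : 0 < n * mmax - C := by
      have := (div_lt_iff₀ hnpos).mp h1
      linarith
    have : bmax * (n * mmax - C) ≤ n * lamd := by
      calc bmax * (n * mmax - C) ≤ (n * lamd / (n * mmax - C)) * (n * mmax - C) := by
            apply mul_le_mul_of_nonneg_right h2 hden.le
        _ = n * lamd := div_mul_cancel₀ _ hden.ne'
    have hCn : C / n * n = C := div_mul_cancel₀ _ hnpos.ne'
    nlinarith
end

section
/- Suppose λ* ≥ 0 and for each i, x*_i maximizes min{β_i x, φ_i β_i} - λ* x over x ≥ 0, with β_i, φ_i > 0, and ∑_{i=1}^n x*_i = C where C > 0. If ∑ φ_i < C then λ* = 0; if ∑ φ_i > C then λ* > 0. -/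
theorem stmt_7 (n : ℕ) (β φ : Fin n → ℝ) (lam C : ℝ) (x : Fin n → ℝ)
    (hβ : ∀ i, 0 < β i) (hφ : ∀ i, 0 < φ i) (hlam : 0 ≤ lam) (hC : 0 < C)
    (hx : ∀ i, 0 ≤ x i)
    (hopt : ∀ i, ∀ y : ℝ, 0 ≤ y →
      min (β i * y) (φ i * β i) - lam * y ≤ min (β i * x i) (φ i * β i) - lam * x i)
    (hbal : ∑ i, x i = C) :
    ((∑ i, φ i) < C → lam = 0) ∧ ((∑ i, φ i) > C → 0 < lam) := by
  constructor
  · intro hlt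
    by_contra hne
    have hpos : 0 < lam := lt_of_le_of_ne hlam (Ne.symm hne)
    have hle : ∀ i, x i ≤ φ i := by
      intro i
      have h := hopt i (φ i) (hφ i).le
      have hmin : min (β i * φ i) (φ i * β i) = φ i * β i := by
        rw [mul_comm]; exact min_self _
      rw [hmin] at h
      have h2 : min (β i * x i) (φ i * β i) ≤ φ i * β i := min_le_right _ _
      have : lam * x i ≤ lam * φ i := by nlinarith
      exact le_of_mul_le_mul_left this hpos
    have : C ≤ ∑ i, φ i := hbal ▸ Finset.sum_le_sum (fun i _ => hle i)
    linarith
  · intro hgt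
    rcases lt_or_eq_of_le hlam with h | h
    · exact h
    · exfalso
      have hge : ∀ i, φ i ≤ x i := by
        intro i
        have h0 := hopt i (φ i) (hφ i).le
        rw [← h] at h0
        have hmin : min (β i * φ i) (φ i * β i) = φ i * β i := by
          rw [mul_comm]; exact min_self _
        rw [hmin] at h0
        simp only [zero_mul, sub_zero] at h0
        have h2 : min (β i * x i) (φ i * β i) ≤ β i * x i := min_le_left _ _
        have : φ i * β i ≤ β i * x i := le_trans h0 h2
        nlinarith [hβ i]
      have : ∑ i, φ i ≤ C := hbal ▸ Finset.sum_le_sum (fun i _ => hge i)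
      linarith
end

section
/- Let n ≥ 1, C > 0, λ† > 0, and β_max, φ_max > 0 satisfy either (φ_max < C/n) or (φ_max ≥ C/n and β_max ≤ λ†). Then for any parameters with 0 < β_i ≤ β_max, 0 < φ_i ≤ φ_max, any nonnegative equilibrium price λ* (i.e., λ* ≥ 0 such that there exist x*_i ≥ 0 maximizing min{β_i x, φ_i β_i} - λ* x over x ≥ 0 with ∑ x*_i = C) satisfies λ* ≤ λ†. -/
theorem stmt_8 (n : ℕ) (hn : 1 ≤ n) (C lamd βmax φmax : ℝ)
    (hC : 0 < C) (hlamd : 0 < lamd) (hβmax : 0 < βmax) (hφmax : 0 < φmax)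
    (hset : φmax < C / n ∨ (φmax ≥ C / n ∧ βmax ≤ lamd))
    (β φ : Fin n → ℝ)
    (hβ : ∀ i, 0 < β i) (hβle : ∀ i, β i ≤ βmax)
    (hφ : ∀ i, 0 < φ i) (hφle : ∀ i, φ i ≤ φmax)
    (lam : ℝ) (hlam : 0 ≤ lam)
    (heq : ∃ x : Fin n → ℝ, (∀ i, 0 ≤ x i) ∧
      (∀ i, ∀ y : ℝ, 0 ≤ y →
        min (β i * y) (φ i * β i) - lam * y ≤ min (β i * x i) (φ i * β i) - lam * x i) ∧
      ∑ i, x i = C) :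
    lam ≤ lamd := by
  by_contra h
  push_neg at h
  obtain ⟨x, hx0, hopt, hsum⟩ := heq
  have hlam0 : 0 < lam := lt_trans hlamd h
  have hn0 : (0 : ℝ) < n := by exact_mod_cast Nat.lt_of_lt_of_le Nat.zero_lt_one hn
  rcases hset with hφC | ⟨_, hβl⟩
  · -- each x i ≤ φ i
    have hxφ : ∀ i, x i ≤ φ i := by
      intro i
      by_contra hgt
      push_neg at hgt
      have hkey := hopt i (φ i) (le_of_lt (hφ i))
      have hmin1 : min (β i * φ i) (φ i * β i) = φ i * β i := by
        rw [mul_comm]; exact min_self _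
      have hmin2 : min (β i * x i) (φ i * β i) = φ i * β i := by
        apply min_eq_right
        rw [mul_comm (φ i)]
        exact mul_le_mul_of_nonneg_left hgt.le (hβ i).le
      rw [hmin1, hmin2] at hkey
      have : lam * x i ≤ lam * φ i := by linarith
      have := le_of_mul_le_mul_left this hlam0
      linarith
    have hsum2 : ∑ i, x i ≤ ∑ _i : Fin n, φmax := by
      apply Finset.sum_le_sum
      intro i _
      exact le_trans (hxφ i) (hφle i)
    rw [hsum, Finset.sum_const, Finset.card_fin, nsmul_eq_mul] at hsum2
    have : (n : ℝ) * φmax < (n : ℝ) * (C / n) :=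
      mul_lt_mul_of_pos_left hφC hn0
    rw [mul_div_cancel₀ _ (ne_of_gt hn0)] at this
    linarith
  · -- each x i = 0
    have hxz : ∀ i, x i = 0 := by
      intro i
      have hkey := hopt i 0 le_rfl
      have h0 : min (β i * 0) (φ i * β i) = 0 := by
        rw [mul_zero]
        exact min_eq_left (mul_nonneg (hφ i).le (hβ i).le)
      rw [h0, mul_zero, sub_zero] at hkey
      have hmle : min (β i * x i) (φ i * β i) ≤ β i * x i := min_le_left _ _
      have hβlam : β i < lam := lt_of_le_of_lt (le_trans (hβle i) hβl) h
      nlinarith [hx0 i]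
    have : ∑ i, x i = 0 := Finset.sum_eq_zero fun i _ => hxz i
    rw [hsum] at this
    linarith
end

section
/- Let n ≥ 1, C > 0, and b_i, m_i > 0 for all i with ∑_{i=1}^n m_i > C. Then there exists a unique λ* > 0 such that ∑_{i=1}^n max{m_i - λ*/b_i, 0} = C. -/
theorem stmt_15 (n : ℕ) (hn : 1 ≤ n) (C : ℝ) (hC : 0 < C) (b m : Fin n → ℝ)
    (hb : ∀ i, 0 < b i) (hm : ∀ i, 0 < m i) (hsum : C < ∑ i, m i) :
    ∃! lam : ℝ, 0 < lam ∧ ∑ i, max (m i - lam / b i) 0 = C := by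
  set f : ℝ → ℝ := fun lam => ∑ i, max (m i - lam / b i) 0 with hf
  have hcont : Continuous f := by
    apply continuous_finset_sum
    intro i _
    exact (continuous_const.sub (continuous_id.div_const _)).max continuous_const
  -- antitone
  have hanti : ∀ x y : ℝ, x ≤ y → f y ≤ f x := by
    intro x y hxy
    apply Finset.sum_le_sum
    intro i _
    apply max_le_max _ le_rfl
    have : x / b i ≤ y / b i := by gcongr; exact (hb i).le
    linarith
  -- strict decrease when value at larger point is positive
  have hstrict : ∀ x y : ℝ, x < y → 0 < f y → f y < f x := by
    intro x y hxy hpos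
    obtain ⟨i, _, hi⟩ := Finset.exists_ne_zero_of_sum_ne_zero (ne_of_gt hpos)
    have hi' : 0 < m i - y / b i := by
      rcases le_or_gt (m i - y / b i) 0 with h | h
      · exact absurd (max_eq_right h) hi
      · exact h
    apply Finset.sum_lt_sum
    · intro j _
      apply max_le_max _ le_rfl
      have : x / b j ≤ y / b j := by gcongr; exact (hb j).le
      linarith
    · refine ⟨i, Finset.mem_univ i, ?_⟩
      have hdiv : x / b i < y / b i := by gcongr; exact hb i
      calc max (m i - y / b i) 0 = m i - y / b i := max_eq_left hi'.le
        _ < m i - x / b i := by linarith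
        _ ≤ max (m i - x / b i) 0 := le_max_left _ _
  -- values at endpoints
  have hf0 : f 0 = ∑ i, m i := by
    simp only [hf]
    refine Finset.sum_congr rfl fun i _ => ?_
    rw [zero_div, sub_zero, max_eq_left (hm i).le]
  set Λ : ℝ := ∑ i, b i * m i with hΛ
  have hΛnn : 0 ≤ Λ := Finset.sum_nonneg fun i _ => (mul_pos (hb i) (hm i)).le
  have hfΛ : f Λ = 0 := by
    apply Finset.sum_eq_zero
    intro i _
    have hle : b i * m i ≤ Λ :=
      Finset.single_le_sum (fun j _ => (mul_pos (hb j) (hm j)).le) (Finset.mem_univ i)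
    have : m i ≤ Λ / b i := (le_div_iff₀ (hb i)).mpr (by linarith [hle])
    exact max_eq_right (by linarith)
  -- existence via IVT
  have hmem : C ∈ Set.Icc (f Λ) (f 0) := by
    rw [hfΛ, hf0]; exact ⟨hC.le, hsum.le⟩
  obtain ⟨lam, hlamIcc, hflam⟩ := intermediate_value_Icc' hΛnn hcont.continuousOn hmem
  have hlampos : 0 < lam := by
    rcases hlamIcc.1.lt_or_eq with h | h
    · exact h
    · exfalso; rw [← h] at hflam; rw [hf0] at hflam; linarith
  refine ⟨lam, ⟨hlampos, hflam⟩, ?_⟩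
  rintro y ⟨hy, hfy0⟩
  have hfy : f y = C := hfy0
  rcases lt_trichotomy y lam with h | h | h
  · have := hstrict y lam h (by rw [hflam]; exact hC)
    rw [hflam, hfy] at this; linarith
  · exact h
  · have := hstrict lam y h (by rw [hfy]; exact hC)
    rw [hflam, hfy] at this; linarith
end
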